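/- The field automorphism of ℚ(x_1, x_2) interchanging x_1 and x_2 maps x_m to x_{3-m} for every m ∈ ℤ. -/

import Mathlib

noncomputable abbrev K : Type := FractionRing (MvPolynomial (Fin 2) ℚ)

noncomputable def X1 : K := algebraMap (MvPolynomial (Fin 2) ℚ) K (MvPolynomial.X 0)

noncomputable def X2 : K := algebraMap (MvPolynomial (Fin 2) ℚ) K (MvPolynomial.X 1)

lemma seq_uniq (a b : ℤ → K) (ha : ∀ m : ℤ, a m ≠ 0) (hb : ∀ m : ℤ, b m ≠ 0)
    (hra : ∀ m : ℤ, a (m - 1) * a (m + 1) = a m ^ 2 + 1)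
    (hrb : ∀ m : ℤ, b (m - 1) * b (m + 1) = b m ^ 2 + 1)
    (h1 : a 1 = b 1) (h2 : a 2 = b 2) : ∀ m : ℤ, a m = b m := by
  have key : ∀ m : ℤ, a m = b m ∧ a (m + 1) = b (m + 1) := by
    intro m
    induction m using Int.induction_on with
    | zero =>
      refine ⟨?_, by simpa using h1⟩
      have e1 := hra 1
      have e2 := hrb 1
      norm_num at e1 e2
      apply mul_right_cancel₀ (hb 2)
      linear_combination e1 - e2 - a 0 * h2 + (a 1 + b 1) * h1
    | succ i ih =>
      obtain ⟨h, h'⟩ := ih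
      refine ⟨h', ?_⟩
      have e1 := hra ((i : ℤ) + 1)
      have e2 := hrb ((i : ℤ) + 1)
      have eq1 : ((i : ℤ) + 1 - 1) = (i : ℤ) := by ring
      rw [eq1] at e1 e2
      have : a (i : ℤ) * a ((i : ℤ) + 1 + 1) = a (i : ℤ) * b ((i : ℤ) + 1 + 1) := by
        rw [e1, h, h', e2]
      exact mul_left_cancel₀ (ha _) this
    | pred i ih =>
      obtain ⟨h, h'⟩ := ih
      constructor
      · have e1 := hra (-(i : ℤ))
        have e2 := hrb (-(i : ℤ))
        have : a (-(i : ℤ) - 1) * a (-(i : ℤ) + 1) = b (-(i : ℤ) - 1) * a (-(i : ℤ) + 1) := by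
          linear_combination e1 - e2 + (a (-(i : ℤ)) + b (-(i : ℤ))) * h - b (-(i : ℤ) - 1) * h'
        exact mul_right_cancel₀ (ha _) this
      · have : (-(i : ℤ) - 1 + 1) = -(i : ℤ) := by ring
        rw [this]; exact h
  exact fun m => (key m).1

theorem automorphism_symmetry (x : ℤ → K) (hx1 : x 1 = X1) (hx2 : x 2 = X2)
    (hxnz : ∀ m : ℤ, x m ≠ 0)
    (hrec : ∀ m : ℤ, x (m - 1) * x (m + 1) = x m ^ 2 + 1)
    (σ : K ≃+* K) (hσ1 : σ X1 = X2) (hσ2 : σ X2 = X1) :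
    ∀ m : ℤ, σ (x m) = x (3 - m) := by
  set z : ℤ → K := fun m => σ.symm (x (3 - m)) with hz
  have hzne : ∀ m : ℤ, z m ≠ 0 := by
    intro m h
    apply hxnz (3 - m)
    have := congrArg σ h
    simpa [hz] using this
  have hzrec : ∀ m : ℤ, z (m - 1) * z (m + 1) = z m ^ 2 + 1 := by
    intro m
    have := hrec (3 - m)
    have e1 : (3 - m - 1) = 3 - (m + 1) := by ring
    have e2 : (3 - m + 1) = 3 - (m - 1) := by ring
    rw [e1, e2] at this
    simp only [hz]
    rw [← map_mul, mul_comm, this]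
    simp [map_add, map_pow]
  have hz1 : x 1 = z 1 := by
    simp only [hz]
    norm_num
    rw [hx1, hx2, ← hσ1]
    simp
  have hz2 : x 2 = z 2 := by
    simp only [hz]
    norm_num
    rw [hx1, hx2, ← hσ2]
    simp
  have := seq_uniq x z hxnz hzne hrec hzrec hz1 hz2
  intro m
  rw [this m]
  simp [hz]
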